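/- For every $m \geq 2$, the Gromov–Hausdorff distance between the unit circle $S^1$ with geodesic metric and the vertex set $P_m$ of the inscribed regular $m$-gon (with restricted geodesic metric) equals $\frac{\pi}{m}$. -/

import Mathlib

open Real

/-- Vertex set of the regular `n`-gon inscribed in the unit circle, modeled inside
`AddCircle (2π)` whose quotient metric is exactly the geodesic metric
`d(α,β) = min (|α-β|) (2π - |α-β|)`. -/
noncomputable def Pvert (n : ℕ) : Set (AddCircle (2 * π)) :=
  Set.range fun j : Fin n => ((2 * π * j / n : ℝ) : AddCircle (2 * π))

instance (n : ℕ) : Finite (Pvert n) := by unfold Pvert; exact (Set.finite_range _).to_subtype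


instance (n : ℕ) [NeZero n] : Nonempty (Pvert n) := by
  unfold Pvert; exact ⟨⟨_, Set.mem_range_self (0 : Fin n)⟩⟩

instance : Fact (0 < 2 * π) := ⟨by positivity⟩


lemma aux_norm_ge (m : ℕ) (hm : 0 < m) (a : ℤ) (ha : ¬ ((m:ℤ) ∣ a)) :
    2 * π / m ≤ ‖((2 * π * a / m : ℝ) : AddCircle (2 * π))‖ := by
  have hm' : (0:ℝ) < m := by exact_mod_cast hm
  rw [AddCircle.norm_eq]
  set c := round ((2 * π)⁻¹ * (2 * π * a / m)) with hc
  have key : 2 * π * a / m - c * (2 * π) = (2 * π / m) * ((a : ℝ) - c * m) := by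
    field_simp
  rw [key, abs_mul, abs_of_pos (by positivity : (0:ℝ) < 2 * π / m)]
  have hne : a - c * m ≠ 0 := by
    intro h
    exact ha ⟨c, by linarith [sub_eq_zero.mp h]⟩
  have h1 : (1:ℤ) ≤ |a - c * m| := Int.one_le_abs hne
  have h1' : (1:ℝ) ≤ |(a:ℝ) - c * m| := by exact_mod_cast h1
  have hpos : (0:ℝ) < 2 * π / m := by positivity
  nlinarith

lemma aux_norm_le (x : ℝ) : ‖((x : ℝ) : AddCircle (2 * π))‖ ≤ |x| := by
  simpa using QuotientAddGroup.norm_mk_le_norm (S := AddSubgroup.zmultiples (2 * π)) (m := x)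

lemma vert_dist (m : ℕ) (hm : 0 < m) (j k : Fin m) (hjk : j ≠ k) :
    2 * π / m ≤ dist ((2 * π * j / m : ℝ) : AddCircle (2 * π)) ((2 * π * k / m : ℝ) : AddCircle (2 * π)) := by
  rw [dist_eq_norm, ← AddCircle.coe_sub]
  have h1 : (2 * π * j / m - 2 * π * k / m : ℝ) = 2 * π * (((j:ℤ) - (k:ℤ) : ℤ) : ℝ) / m := by
    push_cast; ring
  rw [h1]
  apply aux_norm_ge m hm
  intro hd
  have h0 : (j:ℤ) - k ≠ 0 := sub_ne_zero.mpr (fun h => hjk (Fin.ext (by exact_mod_cast h)))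
  have hle := Int.le_of_dvd (abs_pos.mpr h0) ((dvd_abs _ _).mpr hd)
  have hjm : ((j:ℕ):ℤ) < m := by exact_mod_cast j.2
  have hkm : ((k:ℕ):ℤ) < m := by exact_mod_cast k.2
  have hj0 : (0:ℤ) ≤ (j:ℕ) := Int.ofNat_nonneg _
  have hk0 : (0:ℤ) ≤ (k:ℕ) := Int.ofNat_nonneg _
  have habs : |(j:ℤ) - (k:ℤ)| < m := abs_lt.mpr ⟨by linarith, by linarith⟩
  linarith

lemma vert_approx (m : ℕ) (hm : 0 < m) (x : AddCircle (2 * π)) :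
    ∃ j : Fin m, dist x ((2 * π * j / m : ℝ) : AddCircle (2 * π)) ≤ π / m := by
  have hm' : (0:ℝ) < m := by exact_mod_cast hm
  obtain ⟨θ, rfl⟩ := QuotientAddGroup.mk_surjective x
  set k : ℤ := round (θ * m / (2 * π)) with hk
  have hmod : 0 ≤ k % m ∧ k % m < m := ⟨Int.emod_nonneg k (by exact_mod_cast hm.ne'), Int.emod_lt_of_pos k (by exact_mod_cast hm)⟩
  refine ⟨⟨(k % m).toNat, by omega⟩, ?_⟩
  have hjval : (((k % m).toNat : ℕ) : ℝ) = ((k % m : ℤ) : ℝ) := by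
    exact_mod_cast congrArg (fun z : ℤ => (z : ℝ)) (Int.toNat_of_nonneg hmod.1)
  rw [dist_eq_norm, ← AddCircle.coe_sub]
  have e1 : ((k:ℝ) - ((k % (m:ℤ) : ℤ):ℝ)) = (m:ℝ) * ((k / (m:ℤ) : ℤ):ℝ) := by
    rw [Int.emod_def]; push_cast; ring
  have hrw : ((θ - 2 * π * (((k % (m:ℤ)).toNat : ℕ) : ℝ) / m : ℝ) : AddCircle (2 * π))
      = ((θ - 2 * π * (k : ℝ) / m : ℝ) : AddCircle (2 * π)) := by
    have hdiff : (θ - 2 * π * (((k % (m:ℤ)).toNat : ℕ) : ℝ) / m) - (θ - 2 * π * (k : ℝ) / m)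
        = ((k / (m:ℤ) : ℤ) : ℝ) * (2 * π) := by
      rw [hjval]; field_simp; linear_combination 2 * π * e1
    have : ((θ - 2 * π * (((k % (m:ℤ)).toNat : ℕ) : ℝ) / m : ℝ) : AddCircle (2 * π))
        - ((θ - 2 * π * (k : ℝ) / m : ℝ) : AddCircle (2 * π)) = 0 := by
      rw [← AddCircle.coe_sub, hdiff, AddCircle.coe_eq_zero_iff]
      exact ⟨k / (m:ℤ), by rw [zsmul_eq_mul]⟩
    exact sub_eq_zero.mp this
  rw [hrw]
  calc ‖((θ - 2 * π * (k:ℝ) / m : ℝ) : AddCircle (2 * π))‖ ≤ |θ - 2 * π * (k:ℝ) / m| :=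
        aux_norm_le _
    _ = (2 * π / m) * |θ * m / (2 * π) - k| := by
        rw [show (θ - 2 * π * (k:ℝ) / m) = (2 * π / m) * (θ * m / (2 * π) - k) by
          field_simp]
        rw [abs_mul, abs_of_pos (by positivity : (0:ℝ) < 2 * π / m)]
    _ ≤ (2 * π / m) * (1/2) := by
        exact mul_le_mul_of_nonneg_left (abs_sub_round (θ * m / (2 * π))) (by positivity)
    _ = π / m := by ring

open Metric GromovHausdorff in
theorem stmt14 (m : ℕ) (hm : 2 ≤ m) :
    haveI : NeZero m := ⟨by omega⟩
    GromovHausdorff.ghDist (AddCircle (2 * π)) (Pvert m) = π / m := by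
  haveI : NeZero m := ⟨by omega⟩
  have hm0 : 0 < m := by omega
  have hm' : (0:ℝ) < m := by exact_mod_cast hm0
  have hπm : (0:ℝ) < π / m := by positivity
  -- upper bound
  have hub : ghDist (AddCircle (2 * π)) (Pvert m) ≤ π / m := by
    refine le_trans (ghDist_le_hausdorffDist (isometry_id)
      (isometry_subtype_coe : Isometry ((↑) : Pvert m → AddCircle (2 * π)))) ?_
    rw [Set.range_id, Subtype.range_coe]
    apply hausdorffDist_le_of_mem_dist hπm.le
    · intro x _
      obtain ⟨j, hj⟩ := vert_approx m hm0 x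
      exact ⟨_, ⟨j, rfl⟩, hj⟩
    · intro y hy
      exact ⟨y, Set.mem_univ y, by simp [hπm.le]⟩
  -- lower bound
  have hlb : π / m ≤ ghDist (AddCircle (2 * π)) (Pvert m) := by
    by_contra hlt
    push_neg at hlt
    set X := AddCircle (2 * π)
    set D := ghDist X (Pvert m) with hD
    set f := optimalGHInjl X (Pvert m)
    set g := optimalGHInjr X (Pvert m)
    have hf : Isometry f := isometry_optimalGHInjl X (Pvert m)
    have hg : Isometry g := isometry_optimalGHInjr X (Pvert m)
    have hH : hausdorffDist (Set.range f) (Set.range g) = D := hausdorffDist_optimal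
    have hcf : IsCompact (Set.range f) := isCompact_range hf.continuous
    have hcg : IsCompact (Set.range g) := isCompact_range hg.continuous
    have hne_f : (Set.range f).Nonempty := Set.range_nonempty _
    have hne_g : (Set.range g).Nonempty := Set.range_nonempty _
    have hfin : EMetric.hausdorffEdist (Set.range f) (Set.range g) ≠ ⊤ :=
      hausdorffEdist_ne_top_of_nonempty_of_bounded hne_f hne_g hcf.isBounded hcg.isBounded
    -- vertices
    let v : Fin m → Pvert m := fun j => ⟨_, Set.mem_range_self j⟩
    have hv_surj : ∀ p : Pvert m, ∃ j, v j = p := by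
      rintro ⟨_, j, rfl⟩
      exact ⟨j, rfl⟩
    have hv_dist : ∀ j k : Fin m, j ≠ k → 2 * π / m ≤ dist (v j) (v k) := by
      intro j k hjk
      rw [Subtype.dist_eq]
      exact vert_dist m hm0 j k hjk
    -- fibers
    set A : Fin m → Set X := fun j => {x | dist (f x) (g (v j)) ≤ D} with hA
    have hclosed : ∀ j, IsClosed (A j) := fun j =>
      isClosed_le (hf.continuous.dist continuous_const) continuous_const
    have hcover : ∀ x : X, ∃ j, x ∈ A j := by
      intro x
      have h1 : infDist (f x) (Set.range g) ≤ D := by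
        rw [← hH]
        exact infDist_le_hausdorffDist_of_mem (Set.mem_range_self x) hfin
      obtain ⟨y, hy, hyd⟩ := hcg.exists_infDist_eq_dist hne_g (f x)
      obtain ⟨p, rfl⟩ := hy
      obtain ⟨j, rfl⟩ := hv_surj p
      exact ⟨j, by simp only [hA, Set.mem_setOf_eq, ← hyd]; exact h1⟩
    have hnonempty : ∀ j, (A j).Nonempty := by
      intro j
      have h1 : infDist (g (v j)) (Set.range f) ≤ D := by
        rw [← hH, hausdorffDist_comm]
        exact infDist_le_hausdorffDist_of_mem (Set.mem_range_self _)
          (by rw [Metric.hausdorffEDist_comm]; exact hfin)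
      obtain ⟨y, hy, hyd⟩ := hcf.exists_infDist_eq_dist hne_f (g (v j))
      obtain ⟨x, rfl⟩ := hy
      refine ⟨x, ?_⟩
      simp only [hA, Set.mem_setOf_eq, dist_comm (f x) (g (v j)), ← hyd]
      exact h1
    have hdisj : ∀ j k, j ≠ k → ∀ x, x ∈ A j → x ∈ A k → False := by
      intro j k hjk x hxj hxk
      have h1 : dist (v j) (v k) ≤ 2 * D := by
        have t := dist_triangle (g (v j)) (f x) (g (v k))
        rw [dist_comm (g (v j)) (f x)] at t
        have hxj' : dist (f x) (g (v j)) ≤ D := hxj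
        have hxk' : dist (f x) (g (v k)) ≤ D := hxk
        calc dist (v j) (v k) = dist (g (v j)) (g (v k)) := (hg.dist_eq _ _).symm
          _ ≤ dist (f x) (g (v j)) + dist (f x) (g (v k)) := t
          _ ≤ 2 * D := by linarith
      have h2 := hv_dist j k hjk
      have h3 : 2 * π / m ≤ 2 * D := le_trans h2 h1
      have h4 : 2 * π / (m:ℝ) = 2 * (π / m) := by ring
      linarith [hlt]
    -- connectedness contradiction
    set S := A 0 with hS
    set T := ⋃ j : {j : Fin m // j ≠ 0}, A j.1 with hT
    have hTclosed : IsClosed T := isClosed_iUnion_of_finite (fun j => hclosed j.1)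
    have hST : S = Tᶜ := by
      ext x
      constructor
      · intro hx hxT
        obtain ⟨s, ⟨⟨j, hj⟩, rfl⟩, hxj⟩ := hxT
        exact hdisj 0 j (Ne.symm hj) x hx hxj
      · intro hx
        obtain ⟨j, hj⟩ := hcover x
        rcases eq_or_ne j 0 with rfl | hj0
        · exact hj
        · exact absurd (Set.mem_iUnion.mpr ⟨⟨j, hj0⟩, hj⟩) hx
      
    have hSclopen : IsClopen S := ⟨hclosed 0, hST ▸ hTclosed.isOpen_compl⟩
    rcases isClopen_iff.mp hSclopen with h | h
    · exact absurd h (Set.nonempty_iff_ne_empty.mp (hnonempty 0))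
    · obtain ⟨x, hx⟩ := hnonempty ⟨1, by omega⟩
      have h0 : (⟨1, by omega⟩ : Fin m) ≠ 0 := by
        intro hcon
        simpa using congrArg Fin.val hcon
      have hxS : x ∈ S := h ▸ Set.mem_univ x
      exact hdisj 0 ⟨1, by omega⟩ (Ne.symm h0) x hxS hx
  exact le_antisymm hub hlb
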